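/- Let A and B be bounded operators on a complex Hilbert space 𝓗 and suppose xA + yB is invertible for some scalars x, y ∈ ℂ with y ≠ 0. Put T = (xA + yB)⁻¹A, λ₀ = 1/y and λ₁ = −x/y. Then the Kronecker-quiver representation with f_α = A, f_β = B is isomorphic to the representation with g_α = T, g_β = λ₀ I + λ₁ T: the pair (φ₁,φ₂) = (I, (xA + yB)⁻¹) consists of invertible bounded operators and satisfies φ₂ A = T φ₁ and φ₂ B = (λ₀ I + λ₁ T) φ₁. -/
import Mathlib


/-- **Normalizing a Kronecker representation when a combination `xA + yB` is invertible.**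
If `xA + yB` is invertible with `y ≠ 0`, put `T = (xA + yB)⁻¹ A`, `λ₀ = 1/y`,
`λ₁ = -x/y`.  Then the pair `(φ₁, φ₂) = (I, (xA + yB)⁻¹)` consists of invertible bounded
operators and satisfies `φ₂ A = T φ₁` and `φ₂ B = (λ₀ I + λ₁ T) φ₁`, i.e. the
representation `(A, B)` is isomorphic to `(T, λ₀ I + λ₁ T)`. -/
theorem stmt_5 {𝓗 : Type*} [NormedAddCommGroup 𝓗] [InnerProductSpace ℂ 𝓗]
    [CompleteSpace 𝓗] (A B : 𝓗 →L[ℂ] 𝓗) (x y : ℂ) (hy : y ≠ 0)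
    (hinv : IsUnit (x • A + y • B)) :
    IsUnit (1 : 𝓗 →L[ℂ] 𝓗) ∧
    IsUnit ((↑hinv.unit⁻¹ : 𝓗 →L[ℂ] 𝓗)) ∧
    (↑hinv.unit⁻¹ : 𝓗 →L[ℂ] 𝓗) ∘L A =
      ((↑hinv.unit⁻¹ : 𝓗 →L[ℂ] 𝓗) ∘L A) ∘L (1 : 𝓗 →L[ℂ] 𝓗) ∧
    (↑hinv.unit⁻¹ : 𝓗 →L[ℂ] 𝓗) ∘L B =
      ((1 / y) • (1 : 𝓗 →L[ℂ] 𝓗) +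
        (-(x / y)) • ((↑hinv.unit⁻¹ : 𝓗 →L[ℂ] 𝓗) ∘L A)) ∘L (1 : 𝓗 →L[ℂ] 𝓗) := by
  set S : 𝓗 →L[ℂ] 𝓗 := (↑hinv.unit⁻¹ : 𝓗 →L[ℂ] 𝓗) with hS
  have hkey : S * (x • A + y • B) = 1 := by
    rw [hS]
    simpa using congrArg Units.val hinv.unit⁻¹.inv_mul
  refine ⟨isUnit_one, (hinv.unit⁻¹).isUnit, (ContinuousLinearMap.comp_id _).symm, ?_⟩
  have h2 : x • (S * A) + y • (S * B) = 1 := by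
    rw [← hkey]; rw [mul_add]; simp [mul_smul_comm]
  have h3 : y • (S * B) = 1 - x • (S * A) := by
    rw [← h2]; abel
  have h4 : S * B = (1/y) • (1 : 𝓗 →L[ℂ] 𝓗) - (x/y) • (S * A) := by
    have h := congrArg (fun z => (y⁻¹ : ℂ) • z) h3
    simp only [smul_smul, inv_mul_cancel₀ hy, one_smul, smul_sub] at h
    rw [h, mul_comm y⁻¹ x, ← div_eq_mul_inv, one_div]
  show S * B = _
  rw [h4]
  show _ = ((1 / y) • 1 + (-(x / y)) • (S * A)) * 1
  rw [mul_one, sub_eq_add_neg, ← neg_smul]
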